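/- Let θ₁,…,θ_k > 0 and let K_n^{(1)},…,K_n^{(k)} be the numbers of distinct alleles of each class in a random sample of size n governed by the refined Ewens sampling formula. Then P(K_n^{(1)} = p₁, …, K_n^{(k)} = p_k) = (n! θ₁^{p₁} ⋯ θ_k^{p_k}/(θ₁+…+θ_k)_n) · Σ_{n₁+…+n_k = n} ( [n₁ choose-cycles p₁] ⋯ [n_k choose-cycles p_k] / (n₁! ⋯ n_k!) ), where [m choose-cycles p] denotes the unsigned Stirling number of the first kind (number of permutations of m elements with p cycles). -/

import Mathlib

open Finset Nat

/-- The number of cycles of a permutation of `Fin m`, counting fixed points. -/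
def numCycles {m : ℕ} (s : Equiv.Perm (Fin m)) : ℕ :=
  s.cycleType.card + (m - s.support.card)

/-- The unsigned Stirling number of the first kind: the number of permutations of
`m` elements having exactly `p` cycles. -/
noncomputable def stirlingFirst (m p : ℕ) : ℕ :=
  Nat.card {s : Equiv.Perm (Fin m) // numCycles s = p}

section Aux
open Equiv Equiv.Perm

variable {β : Type*} [Fintype β] [DecidableEq β]

/-- number of cycles incl. fixed points, general version -/
def cyc (s : Perm β) : ℕ := s.cycleType.card + (Fintype.card β - s.support.card)

lemma insert_cycle {c : Perm β} (hc : c.IsCycle) {a b : β} (ha : a ∉ c.support)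
    (hb : b ∈ c.support) :
    IsCycle (swap a b * c) ∧ (swap a b * c).support = insert a c.support := by
  have hca : c a = a := notMem_support.1 ha
  have hab : a ≠ b := fun h => ha (h ▸ hb)
  have hcb : c b ≠ b := mem_support.1 hb
  set s := swap a b * c with hs
  have hsa : s a = b := by simp [hs, hca]
  have hkey : ∀ y, c y ≠ b → y ∈ c.support → s y = c y := by
    intro y h1 h2
    have h3 : c y ≠ a := fun h => ha ((c.injective (h.trans hca.symm)) ▸ h2)
    simp [hs, Equiv.Perm.mul_apply, swap_apply_of_ne_of_ne h3 h1]
  have hsupp : s.support = insert a c.support := by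
    ext y
    simp only [mem_support, Finset.mem_insert]
    constructor
    · intro hy
      by_contra hcon
      push_neg at hcon
      obtain ⟨hy1, hy2⟩ := hcon
      have hcy : c y = y := by simpa [mem_support] using hy2
      have hyb : y ≠ b := fun h => hcb (h ▸ hcy)
      exact hy (by simp [hs, hcy, swap_apply_of_ne_of_ne hy1 hyb])
    · rintro (rfl | hy)
      · rw [hsa]; exact hab.symm
      · rcases eq_or_ne (c y) b with h1 | h1
        · have : s y = a := by simp [hs, h1]
          rw [this]
          rintro rfl
          exact ha (mem_support.2 hy)
        · rw [hkey y h1 (mem_support.2 hy)]; exact hy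
  have hpow : ∀ j : ℕ, s.SameCycle a ((c ^ j) b) := by
    intro j
    induction j with
    | zero => exact ⟨1, by simpa using hsa⟩
    | succ j ih =>
      have hmem : (c ^ j) b ∈ c.support := pow_apply_mem_support.2 hb
      rcases eq_or_ne (c ((c ^ j) b)) b with h1 | h1
      · rw [_root_.pow_succ', Equiv.Perm.mul_apply, h1]
        exact ⟨1, by simpa using hsa⟩
      · have : s ((c ^ j) b) = (c ^ (j + 1)) b := by
          rw [hkey _ h1 hmem, _root_.pow_succ', Equiv.Perm.mul_apply]
        exact this ▸ ih.trans ⟨1, by simp⟩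
  refine ⟨⟨a, by rw [hsa]; exact hab.symm, fun y hy => ?_⟩, hsupp⟩
  have : y = a ∨ y ∈ c.support := by
    have := mem_support.2 hy
    rw [hsupp, Finset.mem_insert] at this
    exact this
  rcases this with rfl | hy'
  · exact Equiv.Perm.SameCycle.refl _ _
  · obtain ⟨j, hj⟩ := hc.exists_pow_eq hcb (mem_support.1 hy')
    exact hj ▸ hpow j

lemma cyc_swap_mul {g : Perm β} {a b : β} (hga : g a = a) (hab : a ≠ b) :
    cyc g = cyc (swap a b * g) + 1 := by
  have hag : a ∉ g.support := notMem_support.2 hga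
  rcases eq_or_ne (g b) b with hgb | hgb
  · -- b is a fixed point : swap and g disjoint
    have hdisj : Equiv.Perm.Disjoint (swap a b) g := by
      intro x
      rcases eq_or_ne x a with rfl | hxa
      · exact Or.inr hga
      rcases eq_or_ne x b with rfl | hxb
      · exact Or.inr hgb
      · exact Or.inl (swap_apply_of_ne_of_ne hxa hxb)
    have hct : (swap a b * g).cycleType = {2} + g.cycleType := by
      rw [hdisj.cycleType_mul, (isCycle_swap hab).cycleType, card_support_swap hab]
    have hsupp : (swap a b * g).support = (swap a b).support ∪ g.support :=
      hdisj.support_mul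
    have hcard : (swap a b * g).support.card = 2 + g.support.card := by
      rw [hsupp, Finset.card_union_of_disjoint, card_support_swap hab]
      exact Finset.disjoint_left.2 fun x hx hx' => by
        rw [support_swap hab] at hx
        rcases Finset.mem_insert.1 hx with rfl | hx
        · exact hag hx'
        · rw [Finset.mem_singleton] at hx; subst hx
          exact (mem_support.1 hx') hgb
    have hle : 2 + g.support.card ≤ Fintype.card β := by
      rw [← hcard]; exact Finset.card_le_univ _
    simp only [cyc, hct, hcard, Multiset.card_add, Multiset.card_singleton]
    omega
  · -- b in support of g : insert a into the cycle of b
    have hbmem : b ∈ g.support := mem_support.2 hgb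
    set c := g.cycleOf b with hc
    have hcmem : c ∈ g.cycleFactorsFinset := cycleOf_mem_cycleFactorsFinset_iff.2 hbmem
    have hccyc : c.IsCycle := isCycle_cycleOf g hgb
    have hdisj : Equiv.Perm.Disjoint (g * c⁻¹) c :=
      disjoint_mul_inv_of_mem_cycleFactorsFinset hcmem
    set d := g * c⁻¹ with hd
    have hgdc : g = d * c := by rw [hd, inv_mul_cancel_right]
    have hsuppc : c.support ⊆ g.support := support_cycleOf_le g b
    have hac : a ∉ c.support := fun h => hag (hsuppc h)
    have hbc : b ∈ c.support := by
      rw [mem_support, cycleOf_apply_self]; exact hgb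
    obtain ⟨hscyc, hssupp⟩ := insert_cycle hccyc hac hbc
    have hsd : Equiv.Perm.Disjoint (swap a b * c) d := by
      rw [disjoint_iff_disjoint_support, hssupp]
      have h1 : _root_.Disjoint c.support d.support :=
        (disjoint_iff_disjoint_support.1 hdisj.symm)
      have h2 : a ∉ d.support := by
        rw [notMem_support, hd]
        have hca : c a = a := notMem_support.1 hac
        have : c⁻¹ a = a := by rw [Equiv.Perm.inv_eq_iff_eq, hca]
        simp only [Equiv.Perm.mul_apply, this, hga]
      rw [Finset.insert_eq, Finset.disjoint_union_left]
      exact ⟨Finset.disjoint_singleton_left.2 h2, h1⟩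
    have hswap_g : swap a b * g = (swap a b * c) * d := by
      rw [hgdc, ← (hdisj.symm.commute).eq, ← mul_assoc]
    have hctg : g.cycleType = {c.support.card} + d.cycleType := by
      rw [hgdc, hdisj.cycleType_mul, hccyc.cycleType, add_comm]
    have hcts : (swap a b * g).cycleType = {c.support.card + 1} + d.cycleType := by
      rw [hswap_g, hsd.cycleType_mul, hscyc.cycleType, hssupp,
        Finset.card_insert_of_notMem hac]
    have hsuppg : g.support = c.support ∪ d.support := by
      rw [hgdc, hdisj.support_mul, Finset.union_comm]
    have hsupps : (swap a b * g).support = insert a g.support := by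
      rw [hswap_g, hsd.support_mul, hssupp, hsuppg, Finset.insert_union]
    have hcards : (swap a b * g).support.card = g.support.card + 1 := by
      rw [hsupps, Finset.card_insert_of_notMem hag]
    have hle : g.support.card + 1 ≤ Fintype.card β := by
      rw [← hcards]; exact Finset.card_le_univ _
    simp only [cyc, hctg, hcts, hcards, Multiset.card_add, Multiset.card_singleton]
    omega

lemma cyc_permCongr {α : Type*} [Fintype α] [DecidableEq α] (f : α ≃ β) (σ : Perm α) :
    cyc (f.permCongr σ) = cyc σ := by
  have htriv : ∀ b : β, (fun _ : β => True) b := fun _ => trivial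
  let f' : α ≃ {b : β // True} := f.trans (Equiv.subtypeUnivEquiv htriv).symm
  have hext : σ.extendDomain f' = f.permCongr σ := by
    ext b
    rw [Equiv.Perm.extendDomain_apply_subtype σ f' (htriv b)]
    simp [f', Equiv.permCongr_apply]
  have h1 : (f.permCongr σ).cycleType = σ.cycleType := by
    rw [← hext, Equiv.Perm.cycleType_extendDomain]
  have h2 : (f.permCongr σ).support.card = σ.support.card := by
    rw [← hext, Equiv.Perm.card_support_extend_domain]
  rw [cyc, cyc, h1, h2, Fintype.card_congr f]

lemma optionCongr_eq_extendDomain {α : Type*} [DecidableEq α] (e : Perm α) :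
    e.optionCongr = e.extendDomain (Equiv.optionIsSomeEquiv α).symm := by
  apply Equiv.ext
  intro o
  cases o with
  | none =>
    rw [Equiv.Perm.extendDomain_apply_not_subtype]
    · rfl
    · simp
  | some a =>
    have h : ((some a).isSome = true) := rfl
    rw [Equiv.Perm.extendDomain_apply_subtype e (Equiv.optionIsSomeEquiv α).symm h]
    simp [Equiv.optionIsSomeEquiv]

lemma cyc_optionCongr {α : Type*} [Fintype α] [DecidableEq α] (e : Perm α) :
    cyc e.optionCongr = cyc e + 1 := by
  rw [optionCongr_eq_extendDomain]
  rw [cyc, cyc, Equiv.Perm.cycleType_extendDomain, Equiv.Perm.card_support_extend_domain]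
  have : Fintype.card (Option α) = Fintype.card α + 1 := by simp
  rw [this]
  have := Finset.card_le_univ e.support
  omega


lemma numCycles_eq_cyc {m : ℕ} (s : Perm (Fin m)) : numCycles s = cyc s := by
  rw [numCycles, cyc, Fintype.card_fin]

lemma decomposeOption_symm_eq {α : Type*} [DecidableEq α] (i : Option α) (e : Perm α) :
    Equiv.Perm.decomposeOption.symm (i, e) = swap none i * e.optionCongr := rfl

lemma cyc_decomposeOption {α : Type*} [Fintype α] [DecidableEq α] (i : Option α) (e : Perm α) :
    cyc (Equiv.Perm.decomposeOption.symm (i, e) : Perm (Option α)) =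
      cyc e + (if i = none then 1 else 0) := by
  rw [decomposeOption_symm_eq]
  cases i with
  | none =>
    rw [show (swap (none : Option α) none) = 1 by simp [Equiv.swap_self]; rfl, one_mul,
      cyc_optionCongr, if_pos rfl]
  | some x =>
    simp only [reduceCtorEq, if_false, add_zero]
    have h := cyc_swap_mul (g := e.optionCongr) (a := (none : Option α)) (b := some x)
      (by simp) (by simp)
    rw [cyc_optionCongr] at h
    omega

lemma stirlingFirst_eq_card (m p : ℕ) :
    _root_.stirlingFirst m p = Fintype.card {s : Perm (Fin m) // numCycles s = p} :=
  Nat.card_eq_fintype_card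

lemma stirlingFirst_key (m q : ℕ) :
    _root_.stirlingFirst (m + 1) q =
      Fintype.card {e : Perm (Fin m) // cyc e + 1 = q} +
        m * Fintype.card {e : Perm (Fin m) // cyc e = q} := by
  rw [stirlingFirst_eq_card]
  have E1 : {s : Perm (Fin (m + 1)) // numCycles s = q} ≃
      {σ : Perm (Option (Fin m)) // cyc σ = q} :=
    ((finSuccEquiv m).permCongr).subtypeEquiv fun s => by
      rw [numCycles_eq_cyc, cyc_permCongr]
  have E2 : {σ : Perm (Option (Fin m)) // cyc σ = q} ≃
      {x : Option (Fin m) × Perm (Fin m) //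
        cyc (Equiv.Perm.decomposeOption.symm (x.1, x.2) : Perm (Option (Fin m))) = q} :=
    Equiv.Perm.decomposeOption.subtypeEquiv fun σ => by
      rw [show ((Equiv.Perm.decomposeOption σ).1, (Equiv.Perm.decomposeOption σ).2) =
        Equiv.Perm.decomposeOption σ from rfl, Equiv.symm_apply_apply]
  have E3 : {x : Option (Fin m) × Perm (Fin m) //
        cyc (Equiv.Perm.decomposeOption.symm (x.1, x.2) : Perm (Option (Fin m))) = q} ≃
      Σ i : Option (Fin m), {e : Perm (Fin m) //
        cyc (Equiv.Perm.decomposeOption.symm (i, e) : Perm (Option (Fin m))) = q} :=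
    Equiv.subtypeProdEquivSigmaSubtype
      (fun i e => cyc (Equiv.Perm.decomposeOption.symm (i, e) : Perm (Option (Fin m))) = q)
  rw [Fintype.card_congr (E1.trans (E2.trans E3)), Fintype.card_sigma, Fintype.sum_option]
  congr 1
  · exact Fintype.card_congr (Equiv.subtypeEquivRight fun e => by
      rw [cyc_decomposeOption]; simp)
  · rw [Finset.sum_congr rfl fun x _ => Fintype.card_congr
      (Equiv.subtypeEquivRight fun e => by rw [cyc_decomposeOption])]
    simp [Finset.sum_const, Finset.card_univ, mul_comm]

lemma stirlingFirst_cyc (m p : ℕ) :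
    _root_.stirlingFirst m p = Fintype.card {e : Perm (Fin m) // cyc e = p} := by
  rw [stirlingFirst_eq_card]
  exact Fintype.card_congr (Equiv.subtypeEquivRight fun e => by rw [numCycles_eq_cyc])

lemma stirlingFirst_succ (m p : ℕ) :
    _root_.stirlingFirst (m + 1) (p + 1) = _root_.stirlingFirst m p + m * _root_.stirlingFirst m (p + 1) := by
  rw [stirlingFirst_key, stirlingFirst_cyc, stirlingFirst_cyc]
  congr 1
  exact Fintype.card_congr (Equiv.subtypeEquivRight fun e => by omega)

lemma cyc_pos {m : ℕ} (e : Perm (Fin (m + 1))) : 0 < cyc e := by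
  rcases Nat.eq_zero_or_pos (cyc e) with h | h
  · exfalso
    rw [cyc] at h
    have h1 : Multiset.card e.cycleType = 0 := by omega
    have h2 : e = 1 := Equiv.Perm.card_cycleType_eq_zero.1 h1
    rw [h2] at h
    simp [Fintype.card_fin] at h
  · exact h

lemma stirlingFirst_succ_zero (m : ℕ) : _root_.stirlingFirst (m + 1) 0 = 0 := by
  rw [stirlingFirst_cyc, Fintype.card_eq_zero_iff]
  exact ⟨fun ⟨e, he⟩ => by have := cyc_pos e; omega⟩

lemma stirlingFirst_zero (p : ℕ) : _root_.stirlingFirst 0 p = if p = 0 then 1 else 0 := by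
  rw [stirlingFirst_cyc]
  have hval : ∀ e : Perm (Fin 0), cyc e = 0 := by
    intro e
    have : e = 1 := Subsingleton.elim e 1
    rw [this, cyc]
    simp
  rcases Nat.eq_zero_or_pos p with rfl | hp
  · rw [if_pos rfl]
    rw [Fintype.card_eq_one_iff]
    exact ⟨⟨1, hval 1⟩, fun ⟨e, he⟩ => Subtype.ext (Subsingleton.elim _ _)⟩
  · rw [if_neg (by omega), Fintype.card_eq_zero_iff]
    exact ⟨fun ⟨e, he⟩ => by rw [hval e] at he; omega⟩

/-- allelic partition vectors -/
def partA (n m p : ℕ) : Finset (Fin n → ℕ) :=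
  (Fintype.piFinset fun _ => Finset.range (n + 1)).filter
    (fun x => (∑ j : Fin n, (j.1 + 1) * x j = m) ∧ ∑ j, x j = p)

noncomputable def wgt (n : ℕ) (x : Fin n → ℕ) : ℝ :=
  ∏ j : Fin n, (1 / ((j.1 + 1 : ℝ) ^ (x j) * ((x j)! : ℝ)))

noncomputable def SS (n m p : ℕ) : ℝ := ∑ x ∈ partA n m p, wgt n x

lemma mem_partA {n m p : ℕ} (hmn : m ≤ n) {x : Fin n → ℕ} :
    x ∈ partA n m p ↔ (∑ j : Fin n, (j.1 + 1) * x j = m) ∧ ∑ j, x j = p := by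
  rw [partA, Finset.mem_filter]
  constructor
  · exact fun h => h.2
  · intro h
    refine ⟨?_, h⟩
    rw [Fintype.mem_piFinset]
    intro j
    rw [Finset.mem_range]
    have h1 : (j.1 + 1) * x j ≤ m := h.1 ▸ Finset.single_le_sum
      (f := fun (i : Fin n) => (i.1 + 1) * x i) (fun i _ => Nat.zero_le _) (Finset.mem_univ j)
    have h2 : x j ≤ (j.1 + 1) * x j := Nat.le_mul_of_pos_left _ (Nat.succ_pos _)
    omega

lemma SS_zero (n p : ℕ) : SS n 0 p = if p = 0 then 1 else 0 := by
  rcases Nat.eq_zero_or_pos p with rfl | hp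
  · rw [if_pos rfl, SS]
    have h : partA n 0 0 = {fun _ => 0} := by
      ext x
      rw [mem_partA (Nat.zero_le n), Finset.mem_singleton]
      constructor
      · intro ⟨h1, _⟩
        funext j
        have hle := Finset.single_le_sum (f := fun (i : Fin n) => (i.1 + 1) * x i)
          (fun i _ => Nat.zero_le _) (Finset.mem_univ j)
        rw [h1] at hle
        have h2 : (j.1 + 1) * x j ≤ 0 := hle
        have h3 := Nat.mul_eq_zero.1 (Nat.le_zero.1 h2)
        show x j = 0
        omega
      · rintro rfl; simp
    rw [h, Finset.sum_singleton, wgt]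
    simp
  · rw [if_neg (by omega), SS]
    have h : partA n 0 p = ∅ := by
      ext x
      rw [mem_partA (Nat.zero_le n)]
      simp only [Finset.notMem_empty, iff_false]
      rintro ⟨h1, h2⟩
      have : ∀ j, x j = 0 := by
        intro j
        have hle := Finset.single_le_sum (f := fun (i : Fin n) => (i.1 + 1) * x i)
          (fun i _ => Nat.zero_le _) (Finset.mem_univ j)
        rw [h1] at hle
        have h2 : (j.1 + 1) * x j ≤ 0 := hle
        have h3 := Nat.mul_eq_zero.1 (Nat.le_zero.1 h2)
        omega
      rw [Finset.sum_congr rfl fun j _ => this j] at h2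
      simp at h2
      omega
    rw [h, Finset.sum_empty]

lemma SS_pos_zero (n m : ℕ) (hm : 0 < m) (hmn : m ≤ n) : SS n m 0 = 0 := by
  rw [SS]
  have h : partA n m 0 = ∅ := by
    ext x
    rw [mem_partA hmn]
    simp only [Finset.notMem_empty, iff_false]
    rintro ⟨h1, h2⟩
    have : ∀ j, x j = 0 := by
      intro j
      have hle := Finset.single_le_sum (f := fun (i : Fin n) => x i)
        (fun i _ => Nat.zero_le _) (Finset.mem_univ j)
      rw [h2] at hle
      have h4 : x j ≤ 0 := hle
      omega
    rw [Finset.sum_congr rfl fun j _ => by rw [this j, Nat.mul_zero]] at h1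
    simp at h1
    omega
  rw [h, Finset.sum_empty]

lemma sum_update_split {n : ℕ} {M : Type*} [AddCommMonoid M] (g : Fin n → ℕ → M)
    (x : Fin n → ℕ) (j : Fin n) (v : ℕ) :
    ∑ i, g i (Function.update x j v i) = g j v + ∑ i ∈ Finset.univ.erase j, g i (x i) := by
  rw [← Finset.add_sum_erase _ (fun i => g i (Function.update x j v i)) (Finset.mem_univ j)]
  congr 1
  · rw [Function.update_self]
  · exact Finset.sum_congr rfl fun i hi =>
      by rw [Function.update_of_ne (Finset.ne_of_mem_erase hi)]

lemma sum_split {n : ℕ} {M : Type*} [AddCommMonoid M] (g : Fin n → ℕ → M)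
    (x : Fin n → ℕ) (j : Fin n) :
    ∑ i, g i (x i) = g j (x j) + ∑ i ∈ Finset.univ.erase j, g i (x i) :=
  (Finset.add_sum_erase _ (fun i => g i (x i)) (Finset.mem_univ j)).symm

lemma wgt_update {n : ℕ} (x : Fin n → ℕ) (j : Fin n) (h : x j ≠ 0) :
    ((j.1 + 1 : ℝ) * (x j : ℝ)) * wgt n x = wgt n (Function.update x j (x j - 1)) := by
  obtain ⟨u, hu⟩ : ∃ u, x j = u + 1 := ⟨x j - 1, by omega⟩
  have hprod : wgt n x =
      (1 / ((j.1 + 1 : ℝ) ^ (x j) * ((x j)! : ℝ))) *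
        ∏ i ∈ Finset.univ.erase j, (1 / ((i.1 + 1 : ℝ) ^ (x i) * ((x i)! : ℝ))) := by
    rw [wgt, ← Finset.mul_prod_erase _ _ (Finset.mem_univ j)]
  have hprod2 : wgt n (Function.update x j (x j - 1)) =
      (1 / ((j.1 + 1 : ℝ) ^ (x j - 1) * ((x j - 1)! : ℝ))) *
        ∏ i ∈ Finset.univ.erase j, (1 / ((i.1 + 1 : ℝ) ^ (x i) * ((x i)! : ℝ))) := by
    rw [wgt, ← Finset.mul_prod_erase _ _ (Finset.mem_univ j), Function.update_self]
    congr 1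
    exact Finset.prod_congr rfl fun i hi =>
      by rw [Function.update_of_ne (Finset.ne_of_mem_erase hi)]
  rw [hprod, hprod2, ← mul_assoc]
  congr 1
  rw [hu]
  simp only [Nat.add_sub_cancel]
  have h1 : ((j.1 + 1 : ℝ)) ≠ 0 := by positivity
  have h2 : ((j.1 + 1 : ℝ)) ^ u ≠ 0 := by positivity
  have h3 : ((u)! : ℝ) ≠ 0 := Nat.cast_ne_zero.2 (Nat.factorial_ne_zero u)
  rw [pow_succ]
  rw [Nat.factorial_succ]
  push_cast
  field_simp

lemma shift_term (n m p : ℕ) (hmn : m ≤ n) (j : Fin n) :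
    ∑ x ∈ partA n m (p + 1), ((j.1 + 1 : ℝ) * (x j : ℝ)) * wgt n x =
      if j.1 + 1 ≤ m then SS n (m - (j.1 + 1)) p else 0 := by
  by_cases hj : j.1 + 1 ≤ m
  · rw [if_pos hj, SS]
    have hstep : ∑ x ∈ partA n m (p + 1), ((j.1 + 1 : ℝ) * (x j : ℝ)) * wgt n x =
        ∑ x ∈ (partA n m (p + 1)).filter (fun x => x j ≠ 0),
          ((j.1 + 1 : ℝ) * (x j : ℝ)) * wgt n x := by
      refine (Finset.sum_filter_of_ne fun x hx hne => ?_).symm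
      by_contra hxj
      rw [hxj] at hne
      simp at hne
    rw [hstep]
    refine Finset.sum_bij' (fun x _ => Function.update x j (x j - 1))
      (fun y _ => Function.update y j (y j + 1)) ?_ ?_ ?_ ?_ ?_
    · -- maps into partA n (m - (j+1)) p
      intro x hx
      rw [Finset.mem_filter] at hx
      obtain ⟨hx1, hxj⟩ := hx
      rw [mem_partA hmn] at hx1
      rw [mem_partA (by omega)]
      have e1 := sum_split (fun (i : Fin n) v => (i.1 + 1) * v) x j
      have e2 := sum_split (fun (i : Fin n) v => v) x j
      have e3 := sum_update_split (fun (i : Fin n) v => (i.1 + 1) * v) x j (x j - 1)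
      have e4 := sum_update_split (fun (i : Fin n) v => v) x j (x j - 1)
      constructor
      · rw [e3]
        have h5 : (j.1 + 1) * (x j - 1) = (j.1 + 1) * x j - (j.1 + 1) := by
          rw [Nat.mul_sub, Nat.mul_one]
        have h6 : j.1 + 1 ≤ (j.1 + 1) * x j := Nat.le_mul_of_pos_right _ (by omega)
        rw [hx1.1] at e1
        omega
      · rw [e4]
        rw [hx1.2] at e2
        omega
    · -- inverse maps into the filter
      intro y hy
      rw [mem_partA (by omega : m - (j.1 + 1) ≤ n)] at hy
      rw [Finset.mem_filter]
      have e1 := sum_split (fun (i : Fin n) v => (i.1 + 1) * v) y j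
      have e2 := sum_split (fun (i : Fin n) v => v) y j
      have e3 := sum_update_split (fun (i : Fin n) v => (i.1 + 1) * v) y j (y j + 1)
      have e4 := sum_update_split (fun (i : Fin n) v => v) y j (y j + 1)
      refine ⟨?_, by simp⟩
      rw [mem_partA hmn]
      constructor
      · rw [e3]
        have h5 : (j.1 + 1) * (y j + 1) = (j.1 + 1) * y j + (j.1 + 1) := by ring
        rw [hy.1] at e1
        omega
      · rw [e4]
        rw [hy.2] at e2
        omega
    · intro x hx
      rw [Finset.mem_filter] at hx
      funext i
      show Function.update (Function.update x j (x j - 1)) j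
        (Function.update x j (x j - 1) j + 1) i = x i
      rw [Function.update_self]
      rcases eq_or_ne i j with rfl | hij
      · rw [Function.update_self]
        have := hx.2
        omega
      · rw [Function.update_of_ne hij, Function.update_of_ne hij]
    · intro y hy
      funext i
      show Function.update (Function.update y j (y j + 1)) j
        (Function.update y j (y j + 1) j - 1) i = y i
      rw [Function.update_self]
      rcases eq_or_ne i j with rfl | hij
      · rw [Function.update_self]
        omega
      · rw [Function.update_of_ne hij, Function.update_of_ne hij]
    · intro x hx
      rw [Finset.mem_filter] at hx
      exact wgt_update x j hx.2
  · rw [if_neg hj]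
    refine Finset.sum_eq_zero fun x hx => ?_
    have hx1 := (mem_partA hmn).1 hx
    have hxj : x j = 0 := by
      by_contra hne
      have e1 := sum_split (fun (i : Fin n) v => (i.1 + 1) * v) x j
      rw [hx1.1] at e1
      have h5 : j.1 + 1 ≤ (j.1 + 1) * x j := Nat.le_mul_of_pos_right _ (by omega)
      omega
    rw [hxj]
    simp

lemma SS_rec (n m p : ℕ) (hmn : m ≤ n) :
    (m : ℝ) * SS n m (p + 1) = ∑ i ∈ Finset.range m, SS n i p := by
  have h1 : (m : ℝ) * SS n m (p + 1) =
      ∑ x ∈ partA n m (p + 1), ∑ j : Fin n, ((j.1 + 1 : ℝ) * (x j : ℝ)) * wgt n x := by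
    rw [SS, Finset.mul_sum]
    refine Finset.sum_congr rfl fun x hx => ?_
    have hc := ((mem_partA hmn).1 hx).1
    rw [← Finset.sum_mul]
    congr 1
    rw [← hc]
    push_cast
    rfl
  rw [h1, Finset.sum_comm]
  rw [Finset.sum_congr rfl fun j _ => shift_term n m p hmn j]
  rw [Fin.sum_univ_eq_sum_range (fun j => if j + 1 ≤ m then SS n (m - (j + 1)) p else 0) n]
  rw [← Finset.sum_subset (Finset.range_subset_range.2 hmn)
    (fun j _ hj => by rw [if_neg (by simp at hj ⊢; omega)])]
  rw [Finset.sum_congr rfl fun j hj => if_pos (by simp at hj; omega)]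
  have := Finset.sum_range_reflect (fun i => SS n i p) m
  rw [← this]
  exact Finset.sum_congr rfl fun j hj => by
    simp at hj
    congr 1
    omega

lemma SS_eq (n : ℕ) : ∀ m, m ≤ n → ∀ p, SS n m p * (m ! : ℝ) = _root_.stirlingFirst m p := by
  intro m
  induction m with
  | zero =>
    intro _ p
    rw [SS_zero, _root_.stirlingFirst_zero]
    rcases Nat.eq_zero_or_pos p with rfl | hp
    · simp
    · rw [if_neg (by omega), if_neg (by omega)]
      simp
  | succ m ih =>
    intro hmn p
    have hm : m ≤ n := by omega
    cases p with
    | zero =>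
      rw [SS_pos_zero n (m + 1) (by omega) hmn, _root_.stirlingFirst_succ_zero]
      simp
    | succ p =>
      have hrec1 : ((m + 1 : ℕ) : ℝ) * SS n (m + 1) (p + 1) = ∑ i ∈ Finset.range (m + 1), SS n i p :=
        SS_rec n (m + 1) p hmn
      have hrec2 : (m : ℝ) * SS n m (p + 1) = ∑ i ∈ Finset.range m, SS n i p :=
        SS_rec n m p hm
      rw [Finset.sum_range_succ, ← hrec2] at hrec1
      have key : SS n (m + 1) (p + 1) * ((m + 1)! : ℝ) =
          ((m : ℝ) * SS n m (p + 1) + SS n m p) * (m ! : ℝ) := by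
        rw [Nat.factorial_succ]
        push_cast at hrec1 ⊢
        rw [← hrec1]
        ring
      rw [key, add_mul, mul_assoc, ih hm (p + 1), ih hm p, _root_.stirlingFirst_succ]
      push_cast
      ring

lemma class_sum (n m p : ℕ) (hmn : m ≤ n) (θ : ℝ) :
    ∑ x ∈ partA n m p, ∏ j : Fin n, (θ / (j.1 + 1)) ^ (x j) / ((x j)! : ℝ) =
      θ ^ p * (_root_.stirlingFirst m p : ℝ) / (m ! : ℝ) := by
  have hterm : ∀ x ∈ partA n m p,
      ∏ j : Fin n, (θ / (j.1 + 1)) ^ (x j) / ((x j)! : ℝ) = θ ^ p * wgt n x := by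
    intro x hx
    have hp := ((mem_partA hmn).1 hx).2
    have : ∀ j : Fin n, (θ / (j.1 + 1)) ^ (x j) / ((x j)! : ℝ) =
        θ ^ (x j) * (1 / ((j.1 + 1 : ℝ) ^ (x j) * ((x j)! : ℝ))) := by
      intro j
      rw [div_pow, div_div, mul_one_div]
    rw [Finset.prod_congr rfl fun j _ => this j, Finset.prod_mul_distrib,
      Finset.prod_pow_eq_pow_sum, hp, wgt]
  rw [Finset.sum_congr rfl hterm, ← Finset.mul_sum, ← SS]
  have hfac : (m ! : ℝ) ≠ 0 := Nat.cast_ne_zero.2 (Nat.factorial_ne_zero m)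
  have := SS_eq n m hmn p
  rw [mul_div_assoc]
  congr 1
  rw [eq_div_iff hfac]
  exact this

end Aux

/-- Joint distribution of the numbers `K_n^{(l)}` of alleles of each class under the
refined Ewens sampling formula:
`P(K_n^{(1)}=p₁,…,K_n^{(k)}=p_k) = (n! θ₁^{p₁}⋯θ_k^{p_k}/(θ₁+…+θ_k)_n) ·
  Σ_{n₁+…+n_k=n} Π_l [n_l, p_l]/n_l!`. -/
theorem joint_distribution_allele_numbers (k n : ℕ) (hn : 0 < n)
    (θ : Fin k → ℝ) (hθ : ∀ l, 0 < θ l) (p : Fin k → ℕ) :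
    ∑' a : {a : Fin k → Fin n → ℕ //
        (∑ l, ∑ j : Fin n, (j.val + 1) * a l j = n) ∧ ∀ l, ∑ j, a l j = p l},
      (n ! : ℝ) / (ascPochhammer ℝ n).eval (∑ l, θ l) *
        ∏ l, ∏ j : Fin n, (θ l / (j.val + 1)) ^ (a.1 l j) / ((a.1 l j)! : ℝ) =
      (n ! : ℝ) * (∏ l, θ l ^ p l) / (ascPochhammer ℝ n).eval (∑ l, θ l) *
        ∑ m ∈ Finset.Nat.antidiagonalTuple k n,
          (∏ l, (_root_.stirlingFirst (m l) (p l) : ℝ)) / ∏ l, ((m l)! : ℝ) := by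
  classical
  have hbd : ∀ a : Fin k → Fin n → ℕ,
      (∑ l, ∑ j : Fin n, (j.val + 1) * a l j = n) → ∀ l j, a l j ≤ n := by
    intro a ha l j
    have h1 : ∑ j : Fin n, (j.val + 1) * a l j ≤ n := by
      have := Finset.single_le_sum
        (f := fun l => ∑ j : Fin n, (j.val + 1) * a l j) (fun i (_ : i ∈ Finset.univ) =>
          Nat.zero_le _) (Finset.mem_univ l)
      rw [ha] at this
      exact this
    have h2 : (j.val + 1) * a l j ≤ ∑ j : Fin n, (j.val + 1) * a l j := Finset.single_le_sum
      (f := fun (i : Fin n) => (i.val + 1) * a l i) (fun i _ => Nat.zero_le _) (Finset.mem_univ j)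
    have h3 : a l j ≤ (j.val + 1) * a l j := Nat.le_mul_of_pos_left _ (Nat.succ_pos _)
    omega
  haveI hfin : Finite {a : Fin k → Fin n → ℕ //
      (∑ l, ∑ j : Fin n, (j.val + 1) * a l j = n) ∧ ∀ l, ∑ j, a l j = p l} := by
    apply Finite.of_injective (f := fun a => (fun l j =>
      (⟨a.1 l j, by have := hbd a.1 a.2.1 l j; omega⟩ : Fin (n + 1)) : Fin k → Fin n → Fin (n + 1)))
    intro a b hab
    apply Subtype.ext
    funext l j
    have := congrFun (congrFun hab l) j
    simpa using congrArg Fin.val this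
  letI : Fintype {a : Fin k → Fin n → ℕ //
      (∑ l, ∑ j : Fin n, (j.val + 1) * a l j = n) ∧ ∀ l, ∑ j, a l j = p l} :=
    Fintype.ofFinite _
  rw [tsum_fintype]
  set G : Finset (Fin k → Fin n → ℕ) :=
    (Fintype.piFinset fun _ : Fin k => Fintype.piFinset fun _ : Fin n => Finset.range (n + 1)).filter
      (fun a => (∑ l, ∑ j : Fin n, (j.val + 1) * a l j = n) ∧ ∀ l, ∑ j, a l j = p l) with hGdef
  have hG : ∀ a : Fin k → Fin n → ℕ, a ∈ G ↔
      ((∑ l, ∑ j : Fin n, (j.val + 1) * a l j = n) ∧ ∀ l, ∑ j, a l j = p l) := by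
    intro a
    rw [hGdef, Finset.mem_filter]
    constructor
    · exact fun h => h.2
    · intro h
      refine ⟨?_, h⟩
      rw [Fintype.mem_piFinset]
      intro l
      rw [Fintype.mem_piFinset]
      intro j
      rw [Finset.mem_range]
      have := hbd a h.1 l j
      omega
  rw [← Finset.sum_subtype G hG (fun a => (n ! : ℝ) / (ascPochhammer ℝ n).eval (∑ l, θ l) *
        ∏ l, ∏ j : Fin n, (θ l / (j.val + 1)) ^ (a l j) / ((a l j)! : ℝ))]
  have hmap : ∀ a ∈ G, (fun l => ∑ j : Fin n, (j.val + 1) * a l j) ∈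
      Finset.Nat.antidiagonalTuple k n := by
    intro a ha
    rw [Finset.Nat.mem_antidiagonalTuple]
    exact ((hG a).1 ha).1
  rw [← Finset.sum_fiberwise_of_maps_to hmap]
  rw [Finset.mul_sum]
  refine Finset.sum_congr rfl fun m hm => ?_
  have hml : ∀ l, m l ≤ n := by
    intro l
    have h1 := Finset.Nat.mem_antidiagonalTuple.1 hm
    have h2 := Finset.single_le_sum (f := fun l => m l)
      (fun i (_ : i ∈ Finset.univ) => Nat.zero_le _) (Finset.mem_univ l)
    rw [h1] at h2
    exact h2
  have hfiber : G.filter (fun a => (fun l => ∑ j : Fin n, (j.val + 1) * a l j) = m) =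
      Fintype.piFinset (fun l => partA n (m l) (p l)) := by
    ext a
    rw [Finset.mem_filter, Fintype.mem_piFinset]
    constructor
    · rintro ⟨haG, hfib⟩
      obtain ⟨hsum, hrow⟩ := (hG a).1 haG
      intro l
      exact (mem_partA (hml l)).2 ⟨congrFun hfib l, hrow l⟩
    · intro h
      have hcontent : ∀ l, (∑ j : Fin n, (j.val + 1) * a l j = m l) ∧ ∑ j, a l j = p l :=
        fun l => (mem_partA (hml l)).1 (h l)
      have hfib : (fun l => ∑ j : Fin n, (j.val + 1) * a l j) = m :=
        funext fun l => (hcontent l).1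
      refine ⟨(hG a).2 ⟨?_, fun l => (hcontent l).2⟩, hfib⟩
      rw [Finset.sum_congr rfl fun l (_ : l ∈ Finset.univ) => (hcontent l).1]
      exact Finset.Nat.mem_antidiagonalTuple.1 hm
  rw [hfiber, ← Finset.mul_sum,
    ← Finset.prod_univ_sum (t := fun l => partA n (m l) (p l))
      (f := fun l x => ∏ j : Fin n, (θ l / (j.val + 1)) ^ (x j) / ((x j)! : ℝ))]
  rw [Finset.prod_congr rfl fun l (_ : l ∈ Finset.univ) => class_sum n (m l) (p l) (hml l) (θ l)]
  rw [Finset.prod_div_distrib, Finset.prod_mul_distrib]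
  ring
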